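/- Let A, B, C be positive semi-definite d×d matrices with A = B + C and B positive definite. Then for all nonzero x ∈ R^d, (xᵀAx)/(xᵀBx) ≤ det(A)/det(B). -/

import Mathlib

open Matrix Finset
open scoped MatrixOrder

/-- **Ratio of quadratic forms bounded by ratio of determinants** (Lemma 12 of
Abbasi-Yadkori et al., 2011). If `A = B + C` with `A, C` positive semi-definite and
`B` positive definite, then for all `x ≠ 0`, `(xᵀAx)/(xᵀBx) ≤ det A / det B`. -/
theorem aux_one_add_sum_le_prod {ι : Type*} (s : Finset ι) (a : ι → ℝ) (ha : ∀ i, 0 ≤ a i) :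
    1 + ∑ i ∈ s, a i ≤ ∏ i ∈ s, (1 + a i) := by
  classical
  induction s using Finset.induction with
  | empty => simp
  | @insert j t h ih =>
    rw [Finset.sum_insert h, Finset.prod_insert h]
    have h1 : (0:ℝ) ≤ ∑ i ∈ t, a i := Finset.sum_nonneg (fun i _ => ha i)
    have h2 : (0:ℝ) ≤ ∏ i ∈ t, (1 + a i) :=
      Finset.prod_nonneg (fun i _ => by linarith [ha i])
    nlinarith [ha j]

theorem aux_det_one_add (d : ℕ) (M : Matrix (Fin d) (Fin d) ℝ) (hM : M.PosSemidef) :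
    1 + M.trace ≤ (1 + M).det := by
  have h := hM.isHermitian
  have hU1 : (h.eigenvectorUnitary : Matrix (Fin d) (Fin d) ℝ) *
      star (h.eigenvectorUnitary : Matrix (Fin d) (Fin d) ℝ) = 1 :=
    Matrix.mem_unitaryGroup_iff.mp h.eigenvectorUnitary.2
  have hU2 : star (h.eigenvectorUnitary : Matrix (Fin d) (Fin d) ℝ) *
      (h.eigenvectorUnitary : Matrix (Fin d) (Fin d) ℝ) = 1 :=
    Matrix.mem_unitaryGroup_iff'.mp h.eigenvectorUnitary.2
  set U : Matrix (Fin d) (Fin d) ℝ := (h.eigenvectorUnitary : Matrix (Fin d) (Fin d) ℝ)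
  set D : Matrix (Fin d) (Fin d) ℝ := diagonal (RCLike.ofReal ∘ h.eigenvalues)
  have hspec : M = U * D * star U := h.spectral_theorem
  have h1M : (1 : Matrix (Fin d) (Fin d) ℝ) + M = U * (1 + D) * star U := by
    rw [hspec, Matrix.mul_add, Matrix.add_mul, Matrix.mul_one, hU1]
  have hdet : (1 + M).det = ∏ i, (1 + h.eigenvalues i) := by
    rw [h1M, det_mul, det_mul, mul_comm (U.det), mul_assoc, ← det_mul, hU1, det_one, mul_one]
    have : (1 : Matrix (Fin d) (Fin d) ℝ) + D = diagonal (fun i => 1 + h.eigenvalues i) := by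
      rw [← diagonal_one, diagonal_add]
      rfl
    rw [this, det_diagonal]
  have htr : M.trace = ∑ i, h.eigenvalues i := by
    conv_lhs => rw [hspec]
    rw [Matrix.trace_mul_cycle, hU2, one_mul]
    simp [D, trace_diagonal]
  rw [hdet, htr]
  exact aux_one_add_sum_le_prod Finset.univ _ (fun i => hM.eigenvalues_nonneg i)

theorem aux_quad_le_trace (d : ℕ) (M : Matrix (Fin d) (Fin d) ℝ) (hM : M.PosSemidef)
    (y : Fin d → ℝ) : y ⬝ᵥ M.mulVec y ≤ M.trace * (y ⬝ᵥ y) := by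
  set N := CFC.sqrt M with hN
  have hNh : Nᴴ = N := (CFC.sqrt_nonneg M).posSemidef.isHermitian
  have hNN : N * N = M := CFC.sqrt_mul_sqrt_self M hM.nonneg
  have hquad : y ⬝ᵥ M.mulVec y = (N.mulVec y) ⬝ᵥ (N.mulVec y) := by
    rw [← hNN, ← Matrix.mulVec_mulVec, Matrix.dotProduct_mulVec y N,
      ← Matrix.mulVec_transpose]
    congr 1
    exact congrArg (fun P => Matrix.mulVec P y) (by simpa using hNh)
  have htr : M.trace = ∑ i, ∑ j, (N i j)^2 := by
    rw [← hNN, Matrix.trace]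
    congr 1
    funext i
    simp only [Matrix.diag, Matrix.mul_apply]
    congr 1
    funext j
    have : N j i = N i j := by
      conv_lhs => rw [← hNh]
      simp [conjTranspose_apply]
    rw [this, sq]
  rw [hquad, htr, Finset.sum_mul]
  apply Finset.sum_le_sum
  intro i _
  have := Finset.sum_mul_sq_le_sq_mul_sq Finset.univ (fun j => N i j) y
  calc N.mulVec y i * N.mulVec y i = (∑ j, N i j * y j)^2 := by
        rw [sq]; rfl
    _ ≤ (∑ j, (N i j)^2) * ∑ j, (y j)^2 := this
    _ = (∑ j, (N i j)^2) * (y ⬝ᵥ y) := by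
        congr 1
        simp [dotProduct, sq]

theorem quadform_ratio_le_det_ratio
    {d : ℕ} (A B C : Matrix (Fin d) (Fin d) ℝ)
    (hA : A.PosSemidef) (hB : B.PosDef) (hC : C.PosSemidef)
    (hABC : A = B + C) (x : Fin d → ℝ) (hx : x ≠ 0) :
    (x ⬝ᵥ A.mulVec x) / (x ⬝ᵥ B.mulVec x) ≤ A.det / B.det := by
  set S := CFC.sqrt B with hSdef
  have hSh : Sᴴ = S := (CFC.sqrt_nonneg B).posSemidef.isHermitian
  have hSS : S * S = B := CFC.sqrt_mul_sqrt_self B hB.posSemidef.nonneg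
  have hdetB : 0 < B.det := hB.det_pos
  have hdetS : IsUnit S.det := by
    have h2 : S.det * S.det = B.det := by rw [← det_mul, hSS]
    refine isUnit_iff_ne_zero.mpr (fun h0 => ?_)
    rw [h0, mul_zero] at h2
    exact absurd h2.symm (ne_of_gt hdetB)
  set T := S⁻¹ with hTdef
  have hST : S * T = 1 := mul_nonsing_inv S hdetS
  have hTS : T * S = 1 := nonsing_inv_mul S hdetS
  have hTh : Tᴴ = T := by rw [hTdef, conjTranspose_nonsing_inv, hSh]
  set M := T * C * T with hMdef
  have hM : M.PosSemidef := by
    have := hC.mul_mul_conjTranspose_same T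
    rwa [hTh] at this
  have hSMS : S * M * S = C := by
    have h1 : S * M * S = (S * T) * C * (T * S) := by
      simp only [hMdef, Matrix.mul_assoc]
    rw [h1, hST, hTS, Matrix.one_mul, Matrix.mul_one]
  have hAeq : A = S * (1 + M) * S := by
    rw [hABC, Matrix.mul_add, Matrix.add_mul, Matrix.mul_one, hSS, hSMS]
  have hdetA : A.det = B.det * (1 + M).det := by
    rw [hAeq, det_mul, det_mul, mul_comm S.det, mul_assoc, ← det_mul, hSS,
      mul_comm (1 + M).det]
  set y := S.mulVec x with hydef
  have hdot : ∀ z : Fin d → ℝ, x ⬝ᵥ S.mulVec z = y ⬝ᵥ z := by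
    intro z
    rw [Matrix.dotProduct_mulVec, hydef, ← Matrix.mulVec_transpose]
    congr 1
    exact congrArg (fun P => Matrix.mulVec P x) (by simpa using hSh)
  have hyy : y ⬝ᵥ y = x ⬝ᵥ B.mulVec x := by
    rw [← hSS, ← Matrix.mulVec_mulVec, hdot]
  have hyMy : y ⬝ᵥ M.mulVec y = x ⬝ᵥ C.mulVec x := by
    conv_rhs => rw [← hSMS, Matrix.mul_assoc, ← Matrix.mulVec_mulVec]
    rw [hdot]
    conv_rhs => rw [← Matrix.mulVec_mulVec, ← hydef]
  have hquad : x ⬝ᵥ A.mulVec x = x ⬝ᵥ B.mulVec x + y ⬝ᵥ M.mulVec y := by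
    rw [hABC, Matrix.add_mulVec, dotProduct_add, hyMy]
  have hBpos : 0 < x ⬝ᵥ B.mulVec x := by
    have := hB.re_dotProduct_pos hx
    simpa using this
  have h1 := aux_quad_le_trace d M hM y
  have h2 := aux_det_one_add d M hM
  rw [div_le_div_iff₀ hBpos hdetB]
  rw [hquad, hdetA, hyy] at *
  nlinarith [mul_le_mul_of_nonneg_right h2 hBpos.le,
    mul_le_mul_of_nonneg_right h1 hdetB.le, hBpos, hdetB,
    mul_pos hBpos hdetB]
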